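/- Let u₁,…,u_m, v₁,…,v_n be unit vectors in a real or complex inner product space and let Φ be an m × n complex matrix. Then |∑_{x,y} Φ_{x,y} ⟨u_x, v_y⟩| ≤ √(m·n) · ‖Φ‖, where ‖Φ‖ is the operator (spectral) norm of Φ. -/

import Mathlib

/-- The spectral (operator) norm of a matrix, as the operator norm of the induced linear map
between Euclidean spaces. -/
noncomputable def specNorm {𝕜 : Type*} [RCLike 𝕜] {m n : Type*} [Fintype m] [Fintype n]
    [DecidableEq n] (Φ : Matrix m n 𝕜) : ℝ :=
  ‖LinearMap.toContinuousLinearMap (Matrix.toEuclideanLin Φ)‖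

lemma specNorm_nonneg {𝕜 : Type*} [RCLike 𝕜] {m n : Type*} [Fintype m] [Fintype n]
    [DecidableEq n] (Φ : Matrix m n 𝕜) : 0 ≤ specNorm Φ := norm_nonneg _

lemma mulVec_euclid_le {𝕜 : Type*} [RCLike 𝕜] {m n : Type*} [Fintype m] [Fintype n]
    [DecidableEq n] (Φ : Matrix m n 𝕜) (c : n → 𝕜) :
    ‖(WithLp.equiv 2 (m → 𝕜)).symm (Φ.mulVec c)‖ ≤
      specNorm Φ * ‖(WithLp.equiv 2 (n → 𝕜)).symm c‖ := by
  have h : (WithLp.equiv 2 (m → 𝕜)).symm (Φ.mulVec c) =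
      LinearMap.toContinuousLinearMap (Matrix.toEuclideanLin Φ)
        ((WithLp.equiv 2 (n → 𝕜)).symm c) := by
    simp [Matrix.toEuclideanLin_apply_piLp_toLp]
  rw [h]
  exact (LinearMap.toContinuousLinearMap (Matrix.toEuclideanLin Φ)).le_opNorm _

lemma key {E : Type*} [NormedAddCommGroup E] [InnerProductSpace ℂ E]
    {m n : ℕ} (Φ : Matrix (Fin m) (Fin n) ℂ) (v : Fin n → E) :
    ∑ x, ‖∑ y, Φ x y • v y‖ ^ 2 ≤ specNorm Φ ^ 2 * ∑ y, ‖v y‖ ^ 2 := by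
  set K : Submodule ℂ E := Submodule.span ℂ (Set.range v) with hK
  haveI : FiniteDimensional ℂ K := FiniteDimensional.span_of_finite ℂ (Set.finite_range v)
  set d := Module.finrank ℂ K with hd
  let b := stdOrthonormalBasis ℂ K
  set V : Fin n → K := fun y => ⟨v y, Submodule.subset_span (Set.mem_range_self y)⟩ with hV
  set c : Fin d → Fin n → ℂ := fun i y => b.repr (V y) i with hc
  -- rewrite LHS
  have hnorm : ∀ x, ‖∑ y, Φ x y • v y‖ ^ 2 =
      ∑ i, ‖Φ.mulVec (c i) x‖ ^ 2 := by
    intro x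
    have h1 : ∑ y, Φ x y • v y = ((∑ y, Φ x y • V y : K) : E) := by
      push_cast [hV]; rfl
    rw [h1, Submodule.norm_coe, ← b.repr.norm_map (∑ y, Φ x y • V y),
      EuclideanSpace.norm_eq, Real.sq_sqrt (by positivity)]
    congr 1
    funext i
    congr 1
    have : b.repr (∑ y, Φ x y • V y) i = ∑ y, Φ x y * c i y := by
      rw [map_sum]
      simp_rw [map_smul]
      rw [WithLp.ofLp_sum, Finset.sum_apply i Finset.univ fun y => Φ x y • b.repr (V y)]
      simp [hc, PiLp.smul_apply, smul_eq_mul]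
    rw [this]
    rfl
  calc ∑ x, ‖∑ y, Φ x y • v y‖ ^ 2 = ∑ x, ∑ i, ‖Φ.mulVec (c i) x‖ ^ 2 := by
        exact Finset.sum_congr rfl fun x _ => hnorm x
    _ = ∑ i, ∑ x, ‖Φ.mulVec (c i) x‖ ^ 2 := Finset.sum_comm
    _ = ∑ i, ‖(WithLp.equiv 2 (Fin m → ℂ)).symm (Φ.mulVec (c i))‖ ^ 2 := by
        refine Finset.sum_congr rfl fun i _ => ?_
        rw [EuclideanSpace.norm_eq, Real.sq_sqrt (by positivity)]
        rfl
    _ ≤ ∑ i, (specNorm Φ * ‖(WithLp.equiv 2 (Fin n → ℂ)).symm (c i)‖) ^ 2 := by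
        refine Finset.sum_le_sum fun i _ => ?_
        exact pow_le_pow_left₀ (norm_nonneg _) (mulVec_euclid_le Φ (c i)) 2
    _ = specNorm Φ ^ 2 * ∑ i, ∑ y, ‖c i y‖ ^ 2 := by
        rw [Finset.mul_sum]
        refine Finset.sum_congr rfl fun i _ => ?_
        rw [mul_pow, EuclideanSpace.norm_eq, Real.sq_sqrt (by positivity)]
        rfl
    _ = specNorm Φ ^ 2 * ∑ y, ‖v y‖ ^ 2 := by
        congr 1
        rw [Finset.sum_comm]
        refine Finset.sum_congr rfl fun y _ => ?_
        have : ∑ i, ‖c i y‖ ^ 2 = ‖b.repr (V y)‖ ^ 2 := by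
          rw [EuclideanSpace.norm_eq, Real.sq_sqrt (by positivity)]
        rw [this, b.repr.norm_map]
        simp [hV, Submodule.norm_coe]

/-- For unit vectors `u₁,…,u_m`, `v₁,…,v_n` in an inner product space and an `m × n`
complex matrix `Φ`, one has `|∑_{x,y} Φ_{x,y} ⟨u_x, v_y⟩| ≤ √(m·n)·‖Φ‖`. -/
theorem stmt8 {E : Type*} [NormedAddCommGroup E] [InnerProductSpace ℂ E]
    {m n : ℕ} (u : Fin m → E) (v : Fin n → E)
    (hu : ∀ x, ‖u x‖ = 1) (hv : ∀ y, ‖v y‖ = 1)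
    (Φ : Matrix (Fin m) (Fin n) ℂ) :
    ‖∑ x, ∑ y, Φ x y * (inner ℂ (u x) (v y) : ℂ)‖ ≤
      Real.sqrt ((m : ℝ) * n) * specNorm Φ := by
  set w : Fin m → E := fun x => ∑ y, Φ x y • v y with hw
  have hrw : ∀ x, ∑ y, Φ x y * (inner ℂ (u x) (v y) : ℂ) = inner ℂ (u x) (w x) := by
    intro x
    rw [hw]
    simp [inner_sum, inner_smul_right]
  have h1 : ‖∑ x, ∑ y, Φ x y * (inner ℂ (u x) (v y) : ℂ)‖ ≤ ∑ x, ‖w x‖ := by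
    calc ‖∑ x, ∑ y, Φ x y * (inner ℂ (u x) (v y) : ℂ)‖
        ≤ ∑ x, ‖∑ y, Φ x y * (inner ℂ (u x) (v y) : ℂ)‖ := norm_sum_le _ _
      _ ≤ ∑ x, ‖w x‖ := by
          refine Finset.sum_le_sum fun x _ => ?_
          rw [hrw x]
          calc ‖(inner ℂ (u x) (w x) : ℂ)‖ ≤ ‖u x‖ * ‖w x‖ := norm_inner_le_norm _ _
            _ = ‖w x‖ := by rw [hu x, one_mul]
  have h2 : ∑ x, ‖w x‖ ^ 2 ≤ specNorm Φ ^ 2 * n := by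
    have := key Φ v
    simpa [hv] using this
  have h3 : (∑ x, ‖w x‖) ^ 2 ≤ (m : ℝ) * ∑ x, ‖w x‖ ^ 2 := by
    simpa using sq_sum_le_card_mul_sum_sq (s := Finset.univ) (f := fun x => ‖w x‖)
  have h4 : (∑ x, ‖w x‖) ^ 2 ≤ ((m : ℝ) * n) * specNorm Φ ^ 2 := by
    calc (∑ x, ‖w x‖) ^ 2 ≤ (m : ℝ) * ∑ x, ‖w x‖ ^ 2 := h3
      _ ≤ (m : ℝ) * (specNorm Φ ^ 2 * n) := by
          exact mul_le_mul_of_nonneg_left h2 (Nat.cast_nonneg m)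
      _ = ((m : ℝ) * n) * specNorm Φ ^ 2 := by ring
  have h5 : ∑ x, ‖w x‖ ≤ Real.sqrt ((m : ℝ) * n) * specNorm Φ := by
    have hs : ∑ x, ‖w x‖ ≤ Real.sqrt (((m : ℝ) * n) * specNorm Φ ^ 2) := by
      rw [← Real.sqrt_sq (Finset.sum_nonneg fun x _ => norm_nonneg _)]
      exact Real.sqrt_le_sqrt h4
    rwa [Real.sqrt_mul (by positivity), Real.sqrt_sq (specNorm_nonneg Φ)] at hs
  exact h1.trans h5
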